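/- Let (Ω, μ) be a probability space and let X, Y : Ω → ℝ be integrable random variables with X ≥ 0 and Y ≥ 0 almost everywhere. Let c ≥ 0 and κ ≥ 0 be real constants, suppose E[X] = m and E[Y] ≤ κ. Then E[log(1 + X)] − E[log(1 + X/(1 + Y + c))] ≤ log((1 + κ + c)/(1 + c/(1 + m))). -/

import Mathlib

open MeasureTheory Real

lemma aux_contOn {a : ℝ} (ha : 0 < a) :
    ContinuousOn (fun x : ℝ => Real.log (a + x)) (Set.Ici 0) := by
  apply ContinuousOn.log
  · exact (continuous_const.add continuous_id).continuousOn
  · intro x hx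
    have : (0:ℝ) ≤ x := hx
    positivity

lemma aux_hasDeriv {a : ℝ} (x : ℝ) (hax : 0 < a + x) :
    HasDerivAt (fun x : ℝ => Real.log (a + x)) (a + x)⁻¹ x := by
  have h1 : HasDerivAt (fun x : ℝ => a + x) 1 x := (hasDerivAt_id x).const_add a
  simpa [one_div] using h1.log hax.ne'

lemma aux_hasDeriv_inv {a : ℝ} (x : ℝ) (hax : 0 < a + x) :
    HasDerivAt (fun x : ℝ => (a + x)⁻¹) (-(1 / (a + x) ^ 2)) x := by
  have h1 : HasDerivAt (fun x : ℝ => a + x) 1 x := (hasDerivAt_id x).const_add a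
  simpa [neg_div, Pi.inv_def] using h1.inv hax.ne'

lemma aux_concave_sub {a b : ℝ} (ha : 0 < a) (hab : a ≤ b) :
    ConcaveOn ℝ (Set.Ici 0) (fun x : ℝ => Real.log (a + x) - Real.log (b + x)) := by
  have hb : 0 < b := ha.trans_le hab
  apply concaveOn_of_hasDerivWithinAt2_nonpos (f' := fun x => (a + x)⁻¹ - (b + x)⁻¹)
    (f'' := fun x => -(1 / (a + x) ^ 2) - -(1 / (b + x) ^ 2)) (convex_Ici 0)
  · exact (aux_contOn ha).sub (aux_contOn hb)
  · intro x hx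
    rw [interior_Ici] at hx
    have hx0 : (0:ℝ) < x := hx
    exact (((aux_hasDeriv x (by linarith)).sub (aux_hasDeriv x (by linarith)))).hasDerivWithinAt
  · intro x hx
    rw [interior_Ici] at hx
    have hx0 : (0:ℝ) < x := hx
    exact (((aux_hasDeriv_inv x (by linarith)).sub
      (aux_hasDeriv_inv x (by linarith)))).hasDerivWithinAt
  · intro x hx
    rw [interior_Ici] at hx
    have hx0 : (0:ℝ) < x := hx
    have h1 : (a + x) ^ 2 ≤ (b + x) ^ 2 := by nlinarith
    have h2 : 1 / (b + x) ^ 2 ≤ 1 / (a + x) ^ 2 :=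
      one_div_le_one_div_of_le (by positivity) h1
    linarith

lemma aux_concave_log {a : ℝ} (ha : 0 < a) :
    ConcaveOn ℝ (Set.Ici 0) (fun x : ℝ => Real.log (a + x)) := by
  apply concaveOn_of_hasDerivWithinAt2_nonpos (f' := fun x => (a + x)⁻¹)
    (f'' := fun x => -(1 / (a + x) ^ 2)) (convex_Ici 0)
  · exact aux_contOn ha
  · intro x hx
    rw [interior_Ici] at hx
    have hx0 : (0:ℝ) < x := hx
    exact (aux_hasDeriv x (by linarith)).hasDerivWithinAt
  · intro x hx
    rw [interior_Ici] at hx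
    have hx0 : (0:ℝ) < x := hx
    exact (aux_hasDeriv_inv x (by linarith)).hasDerivWithinAt
  · intro x hx
    rw [interior_Ici] at hx
    have hx0 : (0:ℝ) < x := hx
    have : (0:ℝ) < (a + x) ^ 2 := by positivity
    have h2 : (0:ℝ) < 1 / (a + x) ^ 2 := by positivity
    linarith


/-- core of Theorem 1, impact of inter-node interference.
If `X, Y` are nonnegative integrable random variables on a probability space with
`E[X] = m` and `E[Y] ≤ κ`, and `c ≥ 0`, `κ ≥ 0`, then
`E[log(1+X)] − E[log(1 + X/(1+Y+c))] ≤ log((1+κ+c)/(1+c/(1+m)))`. -/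
theorem stmt_0 {Ω : Type*} [MeasurableSpace Ω] (μ : Measure Ω) [IsProbabilityMeasure μ]
    (X Y : Ω → ℝ) (hXint : Integrable X μ) (hYint : Integrable Y μ)
    (hX0 : ∀ᵐ ω ∂μ, 0 ≤ X ω) (hY0 : ∀ᵐ ω ∂μ, 0 ≤ Y ω)
    (c κ m : ℝ) (hc : 0 ≤ c) (hκ : 0 ≤ κ)
    (hmean : ∫ ω, X ω ∂μ = m) (hYmean : ∫ ω, Y ω ∂μ ≤ κ) :
    (∫ ω, Real.log (1 + X ω) ∂μ) - (∫ ω, Real.log (1 + X ω / (1 + Y ω + c)) ∂μ)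
      ≤ Real.log ((1 + κ + c) / (1 + c / (1 + m))) := by
  have hXm := hXint.aemeasurable
  have hYm := hYint.aemeasurable
  have hm0 : 0 ≤ m := hmean ▸ integral_nonneg_of_ae hX0
  have hY0' : 0 ≤ ∫ ω, Y ω ∂μ := integral_nonneg_of_ae hY0
  -- integrability of all log terms
  have logNN : ∀ t : ℝ, 0 < t → t ≤ 1 + t → True := fun _ _ _ => trivial
  have hA : Integrable (fun ω => Real.log (1 + X ω)) μ := by
    apply Integrable.mono hXint
      (Real.measurable_log.comp_aemeasurable (aemeasurable_const.add hXm)).aestronglyMeasurable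
    filter_upwards [hX0] with ω h
    simp only [Function.comp_apply, Pi.add_apply]
    rw [Real.norm_eq_abs, Real.norm_eq_abs, abs_of_nonneg (Real.log_nonneg (by linarith)),
      abs_of_nonneg h]
    have := Real.log_le_sub_one_of_pos (show (0:ℝ) < 1 + X ω by linarith)
    linarith
  have hB : Integrable (fun ω => Real.log (1 + Y ω + c)) μ := by
    apply Integrable.mono (hYint.add (integrable_const c))
      (Real.measurable_log.comp_aemeasurable
        ((aemeasurable_const.add hYm).add aemeasurable_const)).aestronglyMeasurable
    filter_upwards [hY0] with ω h
    simp only [Function.comp_apply, Pi.add_apply]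
    rw [Real.norm_eq_abs, Real.norm_eq_abs, abs_of_nonneg (Real.log_nonneg (by linarith)),
      abs_of_nonneg (by positivity : (0:ℝ) ≤ Y ω + c)]
    have := Real.log_le_sub_one_of_pos (show (0:ℝ) < 1 + Y ω + c by linarith)
    linarith
  have hC : Integrable (fun ω => Real.log (1 + X ω + Y ω + c)) μ := by
    apply Integrable.mono ((hXint.add hYint).add (integrable_const c))
      (Real.measurable_log.comp_aemeasurable
        (((aemeasurable_const.add hXm).add hYm).add aemeasurable_const)).aestronglyMeasurable
    filter_upwards [hX0, hY0] with ω h h'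
    simp only [Function.comp_apply, Pi.add_apply]
    rw [Real.norm_eq_abs, Real.norm_eq_abs,
      abs_of_nonneg (Real.log_nonneg (by linarith)),
      abs_of_nonneg (by positivity : (0:ℝ) ≤ X ω + Y ω + c)]
    have := Real.log_le_sub_one_of_pos (show (0:ℝ) < 1 + X ω + Y ω + c by linarith)
    linarith
  have hGc : Integrable (fun ω => Real.log (1 + X ω + c)) μ := by
    apply Integrable.mono (hXint.add (integrable_const c))
      (Real.measurable_log.comp_aemeasurable
        ((aemeasurable_const.add hXm).add aemeasurable_const)).aestronglyMeasurable
    filter_upwards [hX0] with ω h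
    simp only [Function.comp_apply, Pi.add_apply]
    rw [Real.norm_eq_abs, Real.norm_eq_abs, abs_of_nonneg (Real.log_nonneg (by linarith)),
      abs_of_nonneg (by positivity : (0:ℝ) ≤ X ω + c)]
    have := Real.log_le_sub_one_of_pos (show (0:ℝ) < 1 + X ω + c by linarith)
    linarith
  have hG : Integrable (fun ω => Real.log (1 + X ω) - Real.log (1 + X ω + c)) μ := hA.sub hGc
  -- split the second integral
  have hid : ∀ᵐ ω ∂μ, Real.log (1 + X ω / (1 + Y ω + c))
      = Real.log (1 + X ω + Y ω + c) - Real.log (1 + Y ω + c) := by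
    filter_upwards [hX0, hY0] with ω h h'
    have hden : (0:ℝ) < 1 + Y ω + c := by linarith
    have hnum : (0:ℝ) < 1 + X ω + Y ω + c := by linarith
    have e1 : 1 + X ω / (1 + Y ω + c) = (1 + X ω + Y ω + c) / (1 + Y ω + c) := by
      field_simp
      ring
    rw [e1, Real.log_div hnum.ne' hden.ne']
  have hsplit : ∫ ω, Real.log (1 + X ω / (1 + Y ω + c)) ∂μ
      = (∫ ω, Real.log (1 + X ω + Y ω + c) ∂μ) - ∫ ω, Real.log (1 + Y ω + c) ∂μ := by
    rw [integral_congr_ae hid, integral_sub hC hB]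
  -- pointwise bound using Y ≥ 0
  have hpt : ∀ᵐ ω ∂μ, Real.log (1 + X ω) - Real.log (1 + X ω + Y ω + c)
      ≤ Real.log (1 + X ω) - Real.log (1 + X ω + c) := by
    filter_upwards [hX0, hY0] with ω h h'
    have : Real.log (1 + X ω + c) ≤ Real.log (1 + X ω + Y ω + c) :=
      Real.log_le_log (by linarith) (by linarith)
    linarith
  -- Jensen 1
  have hJ1 : (∫ ω, (Real.log (1 + X ω) - Real.log (1 + X ω + c)) ∂μ)
      ≤ Real.log (1 + m) - Real.log (1 + m + c) := by
    have hconc := aux_concave_sub (a := 1) (b := 1 + c) one_pos (by linarith)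
    have hcont : ContinuousOn (fun x : ℝ => Real.log (1 + x) - Real.log ((1 + c) + x))
        (Set.Ici 0) := (aux_contOn one_pos).sub (aux_contOn (by linarith))
    have := hconc.le_map_integral hcont isClosed_Ici
      (by filter_upwards [hX0] with ω h; exact h) hXint
      (by
        have e : ∀ ω, (1:ℝ) + c + X ω = 1 + X ω + c := fun ω => by ring
        simpa [Function.comp_def, e] using hG)
    rw [hmean] at this
    have e2 : (1:ℝ) + c + m = 1 + m + c := by ring
    try simp only [Function.comp_def] at this
    calc (∫ ω, (Real.log (1 + X ω) - Real.log (1 + X ω + c)) ∂μ)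
        = ∫ ω, (Real.log (1 + X ω) - Real.log ((1 + c) + X ω)) ∂μ := by
          congr 1; funext ω; rw [show (1:ℝ) + c + X ω = 1 + X ω + c by ring]
      _ ≤ Real.log (1 + m) - Real.log ((1 + c) + m) := this
      _ = Real.log (1 + m) - Real.log (1 + m + c) := by rw [e2]
  -- Jensen 2
  have hJ2 : (∫ ω, Real.log (1 + Y ω + c) ∂μ) ≤ Real.log (1 + κ + c) := by
    have hconc := aux_concave_log (a := 1 + c) (by linarith)
    have := hconc.le_map_integral (aux_contOn (by linarith)) isClosed_Ici
      (by filter_upwards [hY0] with ω h; exact h) hYint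
      (by
        have e : ∀ ω, (1:ℝ) + c + Y ω = 1 + Y ω + c := fun ω => by ring
        simpa [Function.comp_def, e] using hB)
    try simp only [Function.comp_def] at this
    calc (∫ ω, Real.log (1 + Y ω + c) ∂μ)
        = ∫ ω, Real.log ((1 + c) + Y ω) ∂μ := by
          congr 1; funext ω; rw [show (1:ℝ) + c + Y ω = 1 + Y ω + c by ring]
      _ ≤ Real.log ((1 + c) + ∫ ω, Y ω ∂μ) := this
      _ ≤ Real.log (1 + κ + c) := Real.log_le_log (by linarith) (by linarith)
  -- combine
  have hkey : (∫ ω, Real.log (1 + X ω) ∂μ) - (∫ ω, Real.log (1 + X ω + Y ω + c) ∂μ)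
      ≤ Real.log (1 + m) - Real.log (1 + m + c) := by
    calc (∫ ω, Real.log (1 + X ω) ∂μ) - (∫ ω, Real.log (1 + X ω + Y ω + c) ∂μ)
        = ∫ ω, (Real.log (1 + X ω) - Real.log (1 + X ω + Y ω + c)) ∂μ :=
          (integral_sub hA hC).symm
      _ ≤ ∫ ω, (Real.log (1 + X ω) - Real.log (1 + X ω + c)) ∂μ :=
          integral_mono_ae (hA.sub hC) hG hpt
      _ ≤ Real.log (1 + m) - Real.log (1 + m + c) := hJ1
  have hrhs : Real.log ((1 + κ + c) / (1 + c / (1 + m)))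
      = Real.log (1 + κ + c) - (Real.log (1 + m + c) - Real.log (1 + m)) := by
    have h1m : (0:ℝ) < 1 + m := by linarith
    have e1 : 1 + c / (1 + m) = (1 + m + c) / (1 + m) := by
      field_simp
    rw [e1, Real.log_div (by positivity) (by positivity),
      Real.log_div (by positivity) h1m.ne']
  rw [hsplit, hrhs]
  linarith
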